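/- arXiv:cs/0510085 — 3 statements merged into one kernel-verified Lean document; each statement's English description precedes it below -/
import Mathlib

section
/- For a signal x whose Fourier transform is supported in (-W/2, W/2), and for any real t and τ, the shifted signal satisfies x(t-τ) = Σ_{n∈ℤ} x(t - n/W) · sinc(W(τ - n/W)), where sinc(u) = sin(πu)/(πu). -/
open MeasureTheory Complex Real

noncomputable def sinc (u : ℝ) : ℝ := if u = 0 then 1 else Real.sin (π * u) / (π * u)

section helpers
open Set AddCircle FourierTransform

private lemma key_exp_integral (W b : ℝ) (hW : 0 < W) :
    ∫ θ in (-(W/2))..(W/2), Complex.exp (2*π*Complex.I*b*θ) = (W * _root_.sinc (W*b) : ℝ) := by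
  rcases eq_or_ne b 0 with rfl | hb
  · simp [_root_.sinc]
  · have hπ : (π:ℂ) ≠ 0 := Complex.ofReal_ne_zero.mpr Real.pi_ne_zero
    have hb' : (b:ℂ) ≠ 0 := Complex.ofReal_ne_zero.mpr hb
    have hW' : (W:ℂ) ≠ 0 := Complex.ofReal_ne_zero.mpr hW.ne'
    have hc : (2*π*Complex.I*b : ℂ) ≠ 0 := by
      simp [hπ, Complex.I_ne_zero, hb']
    rw [show (fun θ : ℝ => Complex.exp (2*π*Complex.I*b*θ)) = fun θ : ℝ => Complex.exp ((2*π*Complex.I*b)*θ) from rfl,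
      integral_exp_mul_complex hc]
    have h1 : (2*π*Complex.I*b) * (W/2 : ℝ) = (π * (W * b) : ℝ) * Complex.I := by
      push_cast; ring
    have h2 : (2*π*Complex.I*b) * (-(W/2) : ℝ) = ((-(π * (W * b)) : ℝ)) * Complex.I := by
      push_cast; ring
    rw [h1, h2, Complex.exp_mul_I, Complex.exp_mul_I]
    rw [_root_.sinc, if_neg (by exact fun h => hb (by simpa [hW.ne'] using h))]
    push_cast
    simp only [Complex.cos_neg, Complex.sin_neg, Complex.sin, Complex.cos]
    field_simp
    ring

private lemma norm_exp_unit (c θ : ℝ) : ‖Complex.exp (2*π*Complex.I*c*θ)‖ = 1 := by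
  rw [Complex.norm_exp]
  convert Real.exp_zero using 2
  simp [Complex.ext_iff]

variable (W a : ℝ) [hW : Fact (0 < W)]

private lemma coe_equivIoc_coe (z : AddCircle W) : (((equivIoc W a z : ℝ)) : AddCircle W) = z :=
  (equivIoc W a).symm_apply_apply z

private lemma measurable_liftIoc (f : ℝ → ℂ) (hf : Measurable f) :
    Measurable (liftIoc W a f) :=
  (hf.comp measurable_subtype_coe).comp (measurableEquivIoc W a).measurable

private lemma memL2_liftIoc (f : ℝ → ℂ) (hf : Measurable f) (C : ℝ) (hC : ∀ θ, ‖f θ‖ ≤ C) :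
    MemLp (liftIoc W a f) 2 (haarAddCircle) := by
  refine (memLp_top_of_bound ((measurable_liftIoc W a f hf).aestronglyMeasurable) C
    (Filter.Eventually.of_forall fun z => ?_)).mono_exponent le_top
  exact hC _

private lemma integral_liftIoc (f : ℝ → ℂ) :
    ∫ z : AddCircle W, liftIoc W a f z ∂haarAddCircle = (1/W : ℂ) * ∫ θ in a..a+W, f θ := by
  have h1 : ∫ θ in a..a+W, f θ = ∫ θ in a..a+W, liftIoc W a f ↑θ := by
    rw [intervalIntegral.integral_of_le (by linarith [hW.out]),
        intervalIntegral.integral_of_le (by linarith [hW.out])]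
    refine setIntegral_congr_fun measurableSet_Ioc fun θ hθ => ?_
    rw [liftIoc_coe_apply hθ]
  rw [h1, AddCircle.intervalIntegral_preimage W a (liftIoc W a f),
      volume_eq_smul_haarAddCircle, integral_smul_measure,
      ENNReal.toReal_ofReal hW.out.le]
  rw [Complex.real_smul, ← mul_assoc, one_div,
    inv_mul_cancel₀ (Complex.ofReal_ne_zero.mpr hW.out.ne'), one_mul]

private lemma fourierCoeff_liftIoc' (f : ℝ → ℂ) (n : ℤ) :
    fourierCoeff (liftIoc W a f) n
      = (1/W : ℂ) * ∫ θ in a..a+W, fourier (-n) (θ : AddCircle W) * f θ := by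
  have : fourierCoeff (liftIoc W a f) n
      = ∫ z : AddCircle W, liftIoc W a (fun θ => fourier (-n) (θ : AddCircle W) * f θ) z ∂haarAddCircle := by
    unfold fourierCoeff
    refine integral_congr_ae (Filter.Eventually.of_forall fun z => ?_)
    show fourier (-n) z • liftIoc W a f z = _
    rw [smul_eq_mul]
    show _ = fourier (-n) ((equivIoc W a z : ℝ) : AddCircle W) * f (equivIoc W a z : ℝ)
    rw [coe_equivIoc_coe]
    rfl
  rw [this, integral_liftIoc]

private lemma fourierCoeff_congr_ae' {f g : AddCircle W → ℂ} (h : f =ᵐ[haarAddCircle] g) (n : ℤ) :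
    fourierCoeff f n = fourierCoeff g n := by
  unfold fourierCoeff
  refine integral_congr_ae ?_
  filter_upwards [h] with z hz
  rw [hz]

private lemma pairing_hasSum (f g : ℝ → ℂ)
    (hF : MemLp (liftIoc W a f) 2 (haarAddCircle))
    (hG : MemLp (liftIoc W a g) 2 (haarAddCircle)) :
    HasSum (fun n : ℤ => fourierCoeff (liftIoc W a f) n * (starRingEnd ℂ) (fourierCoeff (liftIoc W a g) n))
      (∫ z : AddCircle W, (starRingEnd ℂ) (liftIoc W a g z) * liftIoc W a f z ∂haarAddCircle) := by
  set Flp := hF.toLp _ with hFlp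
  set Glp := hG.toLp _ with hGlp
  have h := hasSum_fourier_series_L2 Flp
  have hcF : ∀ n, fourierCoeff (⇑Flp) n = fourierCoeff (liftIoc W a f) n :=
    fun n => fourierCoeff_congr_ae' W (hF.coeFn_toLp) n
  have hcG : ∀ n, fourierCoeff (⇑Glp) n = fourierCoeff (liftIoc W a g) n :=
    fun n => fourierCoeff_congr_ae' W (hG.coeFn_toLp) n
  have h2 : HasSum (fun n : ℤ => (innerSL ℂ Glp) (fourierCoeff (⇑Flp) n • fourierLp 2 n))
      ((innerSL ℂ Glp) Flp) := (innerSL ℂ Glp).hasSum h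
  have hterm : ∀ n : ℤ, (innerSL ℂ Glp) (fourierCoeff (⇑Flp) n • fourierLp 2 n)
      = fourierCoeff (liftIoc W a f) n * (starRingEnd ℂ) (fourierCoeff (liftIoc W a g) n) := by
    intro n
    rw [innerSL_apply_apply, inner_smul_right, ← inner_conj_symm]
    have : (inner (𝕜 := ℂ) (fourierLp 2 n) Glp) = fourierCoeff (⇑Glp) n := by
      rw [← fourierBasis_repr, HilbertBasis.repr_apply_apply, coe_fourierBasis]
    rw [this, hcF, hcG]
  have htot : (innerSL ℂ Glp) Flp
      = ∫ z : AddCircle W, (starRingEnd ℂ) (liftIoc W a g z) * liftIoc W a f z ∂haarAddCircle := by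
    rw [innerSL_apply_apply, MeasureTheory.L2.inner_def]
    refine integral_congr_ae ?_
    filter_upwards [hF.coeFn_toLp, hG.coeFn_toLp] with z h1 h2
    rw [RCLike.inner_apply, h1, h2, mul_comm]
  rw [← htot]
  simpa only [hterm] using h2

end helpers

open FourierTransform Set AddCircle

/-- Alternative form of the Shannon sampling theorem: for a continuous L² signal `x`
whose Fourier transform vanishes outside `(-W/2, W/2)`,
`x (t - τ) = ∑_{n ∈ ℤ} x (t - n/W) * _root_.sinc (W (τ - n/W))`. -/
theorem stmt0 (W : ℝ) (hW : 0 < W) (x : ℝ → ℂ)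
    (hcont : Continuous x) (hx1 : Integrable x) (hx2 : MemLp x 2 volume)
    (hband : ∀ θ : ℝ, θ ∉ Set.Ioo (-(W/2)) (W/2) →
      (∫ t : ℝ, x t * Complex.exp (-(2 * π * Complex.I * t * θ))) = 0)
    (t τ : ℝ) :
    HasSum (fun n : ℤ => x (t - n / W) * (_root_.sinc (W * (τ - n / W)) : ℂ))
      (x (t - τ)) := by
  haveI : Fact (0 < W) := ⟨hW⟩
  have hW' : (W:ℂ) ≠ 0 := Complex.ofReal_ne_zero.mpr hW.ne'
  -- the Fourier transform and its properties
  set X : ℝ → ℂ := 𝓕 x with hX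
  have hXeq : ∀ θ, X θ = ∫ s : ℝ, x s * Complex.exp (-(2 * π * Complex.I * s * θ)) := by
    intro θ
    rw [hX, Real.fourier_eq']
    congr 1; ext s
    rw [smul_eq_mul, mul_comm]
    congr 2
    push_cast
    simp [RCLike.inner_apply, conj_trivial]
    ring
  have hX0 : ∀ θ ∉ Set.Ioo (-(W/2)) (W/2), X θ = 0 := fun θ hθ => (hXeq θ).trans (hband θ hθ)
  have hXcont : Continuous X :=
    VectorFourier.fourierIntegral_continuous Real.continuous_fourierChar
      (by exact continuous_inner) hx1
  have hXsupp : HasCompactSupport X := by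
    apply HasCompactSupport.of_support_subset_isCompact (isCompact_Icc (a := -(W/2)) (b := W/2))
    intro θ hθ
    by_contra h
    exact hθ (hX0 θ (fun h' => h (Set.Ioo_subset_Icc_self h')))
  have hXint : Integrable X := hXcont.integrable_of_hasCompactSupport hXsupp
  have hmaster : ∀ s : ℝ, ∫ θ in (-(W/2))..(W/2), X θ * Complex.exp (2*π*Complex.I*s*θ) = x s := by
    intro s
    have hinv := hx1.fourierInv_fourier_eq hXint (hcont.continuousAt (x := s))
    rw [Real.fourierInv_eq'] at hinv
    calc ∫ θ in (-(W/2))..(W/2), X θ * Complex.exp (2*π*Complex.I*s*θ)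
        = ∫ θ in Set.Ioo (-(W/2)) (W/2), X θ * Complex.exp (2*π*Complex.I*s*θ) := by
          rw [intervalIntegral.integral_of_le (by linarith), integral_Ioc_eq_integral_Ioo]
      _ = ∫ θ in Set.Ioo (-(W/2)) (W/2), Complex.exp ((2 * π * (inner ℝ θ s : ℝ) : ℝ) * Complex.I) • X θ := by
          apply setIntegral_congr_fun measurableSet_Ioo
          intro θ hθ
          show X θ * _ = _ • X θ
          rw [smul_eq_mul, mul_comm]
          congr 1
          rw [Complex.exp_eq_exp_iff_exists_int]
          exact ⟨0, by push_cast; simp [RCLike.inner_apply, conj_trivial]; ring⟩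
      _ = ∫ θ : ℝ, Complex.exp ((2 * π * (inner ℝ θ s : ℝ) : ℝ) * Complex.I) • X θ :=
          setIntegral_eq_integral_of_forall_compl_eq_zero (fun θ hθ => by simp [hX0 θ hθ])
      _ = x s := hinv
  -- bound on X
  obtain ⟨C, hC⟩ := (isCompact_Icc (a := -(W/2)) (b := W/2)).exists_bound_of_continuousOn
    hXcont.continuousOn
  have hCX : ∀ θ, ‖X θ‖ ≤ max C 0 := by
    intro θ
    by_cases h : θ ∈ Set.Icc (-(W/2)) (W/2)
    · exact (hC θ h).trans (le_max_left _ _)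
    · rw [hX0 θ (fun h' => h (Set.Ioo_subset_Icc_self h'))]
      simp
  -- the two functions on the circle
  set F0 : ℝ → ℂ := fun θ => X θ * Complex.exp (2*π*Complex.I*t*θ) with hF0
  set G0 : ℝ → ℂ := fun θ => Complex.exp (2*π*Complex.I*τ*θ) with hG0
  have hexpc : ∀ c : ℂ, Continuous fun θ : ℝ => Complex.exp (c * θ) :=
    fun c => Complex.continuous_exp.comp (continuous_const.mul Complex.continuous_ofReal)
  have hF0m : Measurable F0 :=
    (hXcont.mul (hexpc (2*π*Complex.I*t))).measurable
  have hG0m : Measurable G0 := (hexpc (2*π*Complex.I*τ)).measurable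
  have hF : MemLp (liftIoc W (-(W/2)) F0) 2 haarAddCircle := by
    refine memL2_liftIoc W (-(W/2)) F0 hF0m (max C 0) fun θ => ?_
    rw [hF0]
    simp only [norm_mul, norm_exp_unit, mul_one]
    exact hCX θ
  have hG : MemLp (liftIoc W (-(W/2)) G0) 2 haarAddCircle := by
    refine memL2_liftIoc W (-(W/2)) G0 hG0m 1 fun θ => ?_
    show ‖Complex.exp (2*π*Complex.I*τ*θ)‖ ≤ 1
    exact le_of_eq (norm_exp_unit τ θ)
  have H := pairing_hasSum W (-(W/2)) F0 G0 hF hG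
  -- identify the coefficients
  have hcF : ∀ n : ℤ, fourierCoeff (liftIoc W (-(W/2)) F0) n = (1/W : ℂ) * x (t - n/W) := by
    intro n
    rw [fourierCoeff_liftIoc']
    congr 1
    rw [show (-(W/2) : ℝ) + W = W/2 by ring, ← hmaster (t - n/W)]
    refine intervalIntegral.integral_congr fun θ hθ => ?_
    rw [fourier_coe_apply]
    rw [hF0]
    show _ * (X θ * _) = X θ * _
    rw [mul_comm, mul_assoc]
    congr 1
    rw [← Complex.exp_add]
    congr 1
    push_cast
    field_simp
    ring
  have hcG : ∀ n : ℤ, fourierCoeff (liftIoc W (-(W/2)) G0) n = (_root_.sinc (W * (τ - n/W)) : ℂ) := by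
    intro n
    rw [fourierCoeff_liftIoc']
    rw [show (-(W/2) : ℝ) + W = W/2 by ring]
    have : ∫ θ in (-(W/2))..(W/2), fourier (-n) (θ : AddCircle W) * G0 θ
        = ∫ θ in (-(W/2))..(W/2), Complex.exp (2*π*Complex.I*((τ - n/W : ℝ) : ℂ)*θ) := by
      refine intervalIntegral.integral_congr fun θ hθ => ?_
      rw [fourier_coe_apply, hG0]
      show _ * Complex.exp _ = _
      rw [← Complex.exp_add]
      congr 1
      push_cast
      field_simp
      ring
    rw [this, key_exp_integral W (τ - n/W) hW]
    push_cast
    rw [← mul_assoc, one_div, inv_mul_cancel₀ hW', one_mul]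
  -- identify the total
  have htot : (∫ z : AddCircle W, (starRingEnd ℂ) (liftIoc W (-(W/2)) G0 z) * liftIoc W (-(W/2)) F0 z ∂haarAddCircle)
      = (1/W : ℂ) * x (t - τ) := by
    have hlift : (fun z : AddCircle W => (starRingEnd ℂ) (liftIoc W (-(W/2)) G0 z) * liftIoc W (-(W/2)) F0 z)
        = liftIoc W (-(W/2)) (fun θ => (starRingEnd ℂ) (G0 θ) * F0 θ) := rfl
    rw [hlift, integral_liftIoc]
    congr 1
    rw [show (-(W/2) : ℝ) + W = W/2 by ring, ← hmaster (t - τ)]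
    refine intervalIntegral.integral_congr fun θ hθ => ?_
    rw [hG0, hF0]
    show (starRingEnd ℂ) (Complex.exp _) * (X θ * _) = X θ * _
    rw [← Complex.exp_conj]
    rw [mul_comm, mul_assoc]
    congr 1
    rw [← Complex.exp_add]
    congr 1
    push_cast
    simp only [Complex.ext_iff, Complex.conj_re, Complex.conj_im]
    constructor <;> ring_nf <;> simp <;> ring
  rw [htot] at H
  have H2 := H.mul_left (W : ℂ)
  have hfun : ∀ n : ℤ, (W:ℂ) * (fourierCoeff (liftIoc W (-(W/2)) F0) n * (starRingEnd ℂ) (fourierCoeff (liftIoc W (-(W/2)) G0) n))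
      = x (t - n / W) * (_root_.sinc (W * (τ - n / W)) : ℂ) := by
    intro n
    rw [hcF, hcG]
    rw [show ((starRingEnd ℂ) ((_root_.sinc (W * (τ - n/W)) : ℝ) : ℂ)) = ((_root_.sinc (W * (τ - n/W)) : ℝ) : ℂ) from Complex.conj_ofReal _]
    field_simp
  have htotal : (W:ℂ) * ((1/W : ℂ) * x (t - τ)) = x (t - τ) := by
    field_simp
  rw [htotal] at H2
  simpa only [hfun] using H2
end

section
/- Let S(θ,τ) = (√|a₀|/|1-a₀|) e^{-j2πθ(b₀ - a₀τ)/(1-a₀)} for a₀ ≠ 1. Then the narrowband channel operator Nₛ x(t) = ∫∫ S(θ,τ) x(t-τ) e^{j2πθ t} dτ dθ equals the one-path delay-dilation channel: Nₛ x(t) = |a₀|^{-1/2} x((t-b₀)/a₀), for Schwartz functions x (integrals interpreted in the distributional/iterated sense). -/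
open MeasureTheory Complex Real
open scoped FourierTransform

/-- The narrowband spreading function
`S(θ,τ) = (√|a₀|/|1-a₀|) e^{-2πiθ(b₀-a₀τ)/(1-a₀)}` realizes the one-path
delay-dilation channel: for Schwartz `x`, the iterated (principal-value in θ)
integral `∫∫ S(θ,τ) x(t-τ) e^{2πiθt} dθ dτ` converges to
`|a₀|^{-1/2} x((t-b₀)/a₀)`. -/
theorem stmt6 (a₀ b₀ : ℝ) (ha₀ : a₀ ≠ 0) (ha₁ : a₀ ≠ 1)
    (x : SchwartzMap ℝ ℂ) (t : ℝ) :
    Filter.Tendsto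
      (fun R : ℝ => ∫ τ : ℝ,
        (∫ θ in (-R)..R,
          ((Real.sqrt |a₀| / |1 - a₀| : ℝ) : ℂ) *
            Complex.exp (-(2 * π * Complex.I * θ * ((b₀ - a₀ * τ) / (1 - a₀)))) *
            Complex.exp (2 * π * Complex.I * θ * t)) * x (t - τ))
      Filter.atTop
      (nhds (((1 / Real.sqrt |a₀| : ℝ) : ℂ) * x ((t - b₀) / a₀))) := by
  have h1 : (1 : ℝ) - a₀ ≠ 0 := sub_ne_zero.mpr (Ne.symm ha₁)
  have h1c : (1 : ℂ) - (a₀ : ℂ) ≠ 0 := by exact_mod_cast (by exact_mod_cast h1 : ((1:ℝ) - a₀ : ℝ) ≠ 0)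
  set C : ℝ := Real.sqrt |a₀| / |1 - a₀| with hC
  set c : ℝ := a₀ / (1 - a₀) with hcdef
  have hc : c ≠ 0 := div_ne_zero ha₀ h1
  set A : ℝ := (t - b₀) / (1 - a₀) with hA
  set B : ℝ := (t - b₀) / a₀ with hB
  set y : ℝ → ℂ := 𝓕 ⇑x with hy_def
  have hy : Integrable y := by
    have := (SchwartzMap.fourierTransformCLM ℂ x).integrable (μ := volume)
    exact this
  have hycont : Continuous y := by
    have := (SchwartzMap.fourierTransformCLM ℂ x).continuous
    exact this
  set h : ℝ → ℂ := fun θ => (C : ℂ) * Complex.exp (2 * π * Complex.I * θ * (A : ℝ)) * y (c * θ)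
    with hh_def
  -- the pointwise inner (τ-)integral
  have inner_eq : ∀ θ : ℝ,
      (∫ τ : ℝ, (C : ℂ) *
          Complex.exp (-(2 * π * Complex.I * θ * ((b₀ - a₀ * τ) / (1 - a₀)))) *
          Complex.exp (2 * π * Complex.I * θ * t) * x (t - τ)) = h θ := by
    intro θ
    have key : (fun τ : ℝ => (C : ℂ) *
          Complex.exp (-(2 * π * Complex.I * θ * ((b₀ - a₀ * τ) / (1 - a₀)))) *
          Complex.exp (2 * π * Complex.I * θ * t) * x (t - τ)) =
        fun τ : ℝ => ((C : ℂ) * Complex.exp (2 * π * Complex.I * θ * (A : ℝ))) *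
          (Complex.exp ((↑(-2 * π * ((t - τ) * (c * θ))) : ℂ) * Complex.I) * x (t - τ)) := by
      funext τ
      have e : Complex.exp (-(2 * π * Complex.I * θ * ((b₀ - a₀ * τ) / (1 - a₀)))) *
          Complex.exp (2 * π * Complex.I * θ * t) =
          Complex.exp (2 * π * Complex.I * θ * (A : ℝ)) *
          Complex.exp ((↑(-2 * π * ((t - τ) * (c * θ))) : ℂ) * Complex.I) := by
        rw [← Complex.exp_add, ← Complex.exp_add]
        congr 1
        push_cast [hA, hcdef]
        field_simp
        ring
      calc (C : ℂ) * Complex.exp (-(2 * π * Complex.I * θ * ((b₀ - a₀ * τ) / (1 - a₀)))) *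
            Complex.exp (2 * π * Complex.I * θ * t) * x (t - τ)
          = (C : ℂ) * (Complex.exp (-(2 * π * Complex.I * θ * ((b₀ - a₀ * τ) / (1 - a₀)))) *
            Complex.exp (2 * π * Complex.I * θ * t)) * x (t - τ) := by ring
        _ = (C : ℂ) * (Complex.exp (2 * π * Complex.I * θ * (A : ℝ)) *
            Complex.exp ((↑(-2 * π * ((t - τ) * (c * θ))) : ℂ) * Complex.I)) * x (t - τ) := by
            rw [e]
        _ = _ := by ring
    rw [key, MeasureTheory.integral_const_mul,
      integral_sub_left_eq_self
        (fun s : ℝ => Complex.exp ((↑(-2 * π * (s * (c * θ))) : ℂ) * Complex.I) * x s) volume t]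
    have : y (c * θ) = ∫ v : ℝ, Complex.exp ((↑(-2 * π * (v * (c * θ))) : ℂ) * Complex.I) * x v := by
      rw [hy_def, Real.fourier_eq']
      simp [RCLike.inner_apply, smul_eq_mul]
      congr 1; ext v; ring_nf
    rw [← this]
  -- integrability of h
  have hh_int : Integrable h := by
    have hyc : Integrable (fun θ : ℝ => y (c * θ)) := hy.comp_mul_left' hc
    refine (hyc.bdd_mul (c := |C|) ?_ (Filter.Eventually.of_forall fun θ => ?_))
    · exact (Continuous.aestronglyMeasurable (by fun_prop))
    · rw [norm_mul]
      have : ‖Complex.exp (2 * π * Complex.I * θ * (A : ℝ))‖ = 1 := by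
        rw [show (2 * π * Complex.I * θ * (A : ℝ)) = ((2 * π * θ * A : ℝ) : ℂ) * Complex.I by
          push_cast; ring, Complex.norm_exp_ofReal_mul_I]
      simp [this]
  -- value of ∫ h
  have hval : (∫ θ : ℝ, h θ) = ((1 / Real.sqrt |a₀| : ℝ) : ℂ) * x ((t - b₀) / a₀) := by
    set g : ℝ → ℂ := fun ξ => (C : ℂ) * Complex.exp ((↑(2 * π * (ξ * B)) : ℂ) * Complex.I) * y ξ
      with hg_def
    have hAB : A = c * B := by rw [hA, hcdef, hB]; field_simp
    have hhg : ∀ θ : ℝ, h θ = g (c * θ) := by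
      intro θ
      rw [hh_def, hg_def]
      simp only
      congr 2
      push_cast [hAB]
      ring
    have hinv : (∫ ξ : ℝ, Complex.exp ((↑(2 * π * (ξ * B)) : ℂ) * Complex.I) * y ξ) = x B := by
      have : (𝓕⁻ y) B = ∫ ξ : ℝ, Complex.exp ((↑(2 * π * (ξ * B)) : ℂ) * Complex.I) * y ξ := by
        rw [Real.fourierInv_eq']
        simp [RCLike.inner_apply, smul_eq_mul]
        congr 1; ext v; ring_nf
      rw [← this, hy_def]
      exact MeasureTheory.Integrable.fourierInv_fourier_eq x.integrable
        (by simpa [hy_def] using hy) (x.continuous.continuousAt)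
    have hscal : |c⁻¹| * C = 1 / Real.sqrt |a₀| := by
      have hs : Real.sqrt |a₀| ≠ 0 := by
        simpa using Real.sqrt_ne_zero'.mpr (abs_pos.mpr ha₀)
      have h2 : Real.sqrt |a₀| * Real.sqrt |a₀| = |a₀| := Real.mul_self_sqrt (abs_nonneg _)
      rw [hC, hcdef, abs_inv, abs_div]
      field_simp
      nlinarith [abs_pos.mpr ha₀, abs_pos.mpr h1, Real.sqrt_nonneg |a₀|]
    calc (∫ θ : ℝ, h θ) = ∫ θ : ℝ, g (c * θ) := by simp_rw [hhg]
      _ = |c⁻¹| • ∫ ξ : ℝ, g ξ := Measure.integral_comp_mul_left g c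
      _ = |c⁻¹| • ((C : ℂ) * ∫ ξ : ℝ, Complex.exp ((↑(2 * π * (ξ * B)) : ℂ) * Complex.I) * y ξ) := by
          rw [hg_def]; simp_rw [mul_assoc, MeasureTheory.integral_const_mul]
      _ = |c⁻¹| • ((C : ℂ) * x B) := by rw [hinv]
      _ = ((1 / Real.sqrt |a₀| : ℝ) : ℂ) * x ((t - b₀) / a₀) := by
          rw [← hB, real_smul, ← hscal]; push_cast; ring
  -- Fubini for R ≥ 0
  have swap : ∀ R : ℝ, 0 ≤ R →
      (∫ τ : ℝ, (∫ θ in (-R)..R,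
          (C : ℂ) * Complex.exp (-(2 * π * Complex.I * θ * ((b₀ - a₀ * τ) / (1 - a₀)))) *
          Complex.exp (2 * π * Complex.I * θ * t)) * x (t - τ)) =
      ∫ θ in (-R)..R, h θ := by
    intro R hR
    have hle : -R ≤ R := neg_le_self hR
    set f : ℝ → ℝ → ℂ := fun τ θ => (C : ℂ) *
        Complex.exp (-(2 * π * Complex.I * θ * ((b₀ - a₀ * τ) / (1 - a₀)))) *
        Complex.exp (2 * π * Complex.I * θ * t) * x (t - τ) with hf_def
    have hf_int : Integrable (Function.uncurry f)
        (volume.prod (volume.restrict (Set.Ioc (-R) R))) := by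
      have hmeas : AEStronglyMeasurable (Function.uncurry f)
          (volume.prod (volume.restrict (Set.Ioc (-R) R))) := by
        apply Continuous.aestronglyMeasurable
        apply Continuous.mul ?_ (x.continuous.comp (by fun_prop))
        fun_prop
      have hbound : Integrable (fun p : ℝ × ℝ => C * ‖x (t - p.1)‖)
          (volume.prod (volume.restrict (Set.Ioc (-R) R))) := by
        have h1i : Integrable (fun τ : ℝ => C * ‖x (t - τ)‖) := by
          have : Integrable (fun τ : ℝ => ‖x (t - τ)‖) :=
            (x.integrable.norm.comp_sub_left t)
          exact this.const_mul C
        have h2i : Integrable (fun _ : ℝ => (1 : ℝ))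
            (volume.restrict (Set.Ioc (-R) R)) := by
          rw [MeasureTheory.integrable_const_iff]
          right
          exact isFiniteMeasure_restrict.2 (by simp [Real.volume_Ioc])
        simpa using h1i.mul_prod h2i
      refine hbound.mono' hmeas ?_
      filter_upwards with p
      have e1 : ‖Complex.exp (-(2 * π * Complex.I * p.2 * ((b₀ - a₀ * p.1) / (1 - a₀))))‖ = 1 := by
        rw [show (-(2 * π * Complex.I * p.2 * ((b₀ - a₀ * p.1) / (1 - a₀)))) =
            ((-(2 * π * p.2 * ((b₀ - a₀ * p.1) / (1 - a₀))) : ℝ) : ℂ) * Complex.I by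
          push_cast; ring, Complex.norm_exp_ofReal_mul_I]
      have e2 : ‖Complex.exp (2 * π * Complex.I * p.2 * t)‖ = 1 := by
        rw [show ((2 : ℂ) * π * Complex.I * p.2 * t) = ((2 * π * p.2 * t : ℝ) : ℂ) * Complex.I by
          push_cast; ring, Complex.norm_exp_ofReal_mul_I]
      have hCnn : 0 ≤ C := div_nonneg (Real.sqrt_nonneg _) (abs_nonneg _)
      simp only [Function.uncurry, hf_def, norm_mul, e1, e2, mul_one,
        Complex.norm_real, Real.norm_eq_abs, _root_.abs_of_nonneg hCnn]
      exact le_refl _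
    calc (∫ τ : ℝ, (∫ θ in (-R)..R,
            (C : ℂ) * Complex.exp (-(2 * π * Complex.I * θ * ((b₀ - a₀ * τ) / (1 - a₀)))) *
            Complex.exp (2 * π * Complex.I * θ * t)) * x (t - τ))
        = ∫ τ : ℝ, ∫ θ in (-R)..R, f τ θ := by
          simp_rw [hf_def, intervalIntegral.integral_mul_const]
      _ = ∫ τ : ℝ, ∫ θ in Set.Ioc (-R) R, f τ θ := by
          simp_rw [intervalIntegral.integral_of_le hle]
      _ = ∫ θ in Set.Ioc (-R) R, ∫ τ : ℝ, f τ θ := MeasureTheory.integral_integral_swap hf_int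
      _ = ∫ θ in Set.Ioc (-R) R, h θ := by
          apply MeasureTheory.integral_congr_ae
          filter_upwards with θ
          exact inner_eq θ
      _ = ∫ θ in (-R)..R, h θ := (intervalIntegral.integral_of_le hle).symm
  -- conclude
  have main : Filter.Tendsto (fun R : ℝ => ∫ θ in (-R)..R, h θ) Filter.atTop
      (nhds (((1 / Real.sqrt |a₀| : ℝ) : ℂ) * x ((t - b₀) / a₀))) := by
    rw [← hval]
    exact MeasureTheory.intervalIntegral_tendsto_integral hh_int
      Filter.tendsto_neg_atTop_atBot Filter.tendsto_id
  refine main.congr' ?_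
  filter_upwards [Filter.eventually_ge_atTop (0 : ℝ)] with R hR
  exact (swap R hR).symm
end

section
/- (Equivalence of time-varying and frequency-scale representations) Let h(t,τ) define a time-varying channel y(t) = ∫ h(t,τ) x(t-τ) dτ. For input signals x supported on (0,∞) and output observed for t > 0, define ρ(t,a) = (t / (a√a)) h(t, t − t/a) and let ρ̂(ω,a) be its Fourier transform in t. Then y(t) = ∫_{-∞}^{∞} ∫₀^{∞} ρ̂(ω,a) e^{j2πωt} a^{-1/2} x(t/a) da dω for all t > 0. -/
open MeasureTheory Complex Real FourierTransform RealInnerProductSpace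

/-- `ρ(t,a) = (t/(a√a)) h(t, t − t/a)`. -/
noncomputable def rho (h : ℝ → ℝ → ℂ) (t a : ℝ) : ℂ :=
  ((t / (a * Real.sqrt a) : ℝ) : ℂ) * h t (t - t / a)

/-- `ρ̂(ω,a)`: Fourier transform of `ρ(·,a)` (in the time variable, over t > 0). -/
noncomputable def rhoHat (h : ℝ → ℝ → ℂ) (ω a : ℝ) : ℂ :=
  ∫ t in Set.Ioi (0 : ℝ), rho h t a * Complex.exp (-(2 * π * Complex.I * ω * t))

/-- Equivalence of the time-varying and frequency-scale channel representations:
for inputs supported on `(0,∞)` and output observed at `t > 0`,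
`∫ h(t,τ) x(t-τ) dτ = ∫_{-∞}^∞ ∫₀^∞ ρ̂(ω,a) e^{2πiωt} a^{-1/2} x(t/a) da dω`. -/
theorem stmt17 (h : ℝ → ℝ → ℂ) (x : ℝ → ℂ)
    (hx2 : MemLp x 2 volume) (hsupp : ∀ t : ℝ, t ≤ 0 → x t = 0)
    (hint : ∀ t : ℝ, 0 < t → Integrable (fun τ : ℝ => h t τ * x (t - τ)))
    (hrho : ∀ a : ℝ, 0 < a → Integrable (fun t => rho h t a)
      (volume.restrict (Set.Ioi (0 : ℝ))))
    (hrhoc : ∀ a : ℝ, 0 < a → Continuous (fun t => rho h t a))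
    (hFub : ∀ t : ℝ, 0 < t → Integrable (fun p : ℝ × ℝ =>
      rhoHat h p.1 p.2 * Complex.exp (2 * π * Complex.I * p.1 * t) *
        ((1 / Real.sqrt p.2 : ℝ) : ℂ) * x (t / p.2))
      ((volume : Measure ℝ).prod (volume.restrict (Set.Ioi (0 : ℝ)))))
    (t : ℝ) (ht : 0 < t) :
    (∫ τ : ℝ, h t τ * x (t - τ)) =
    ∫ ω : ℝ, ∫ a in Set.Ioi (0 : ℝ),
      rhoHat h ω a * Complex.exp (2 * π * Complex.I * ω * t) *
        ((1 / Real.sqrt a : ℝ) : ℂ) * x (t / a) := by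
  have ht0 : t ≠ 0 := ht.ne'
  -- Step 1: swap the order of integration
  have hswap : (∫ ω : ℝ, ∫ a in Set.Ioi (0:ℝ),
        rhoHat h ω a * Complex.exp (2 * π * Complex.I * ω * t) *
          ((1 / Real.sqrt a : ℝ) : ℂ) * x (t / a))
      = ∫ a in Set.Ioi (0:ℝ), ∫ ω : ℝ,
        rhoHat h ω a * Complex.exp (2 * π * Complex.I * ω * t) *
          ((1 / Real.sqrt a : ℝ) : ℂ) * x (t / a) :=
    MeasureTheory.integral_integral_swap (hFub t ht)
  rw [hswap]
  -- Step 2: Fourier inversion in the inner integral, a.e. in `a`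
  have key : (fun a : ℝ => ∫ ω : ℝ,
        rhoHat h ω a * Complex.exp (2 * π * Complex.I * ω * t) *
          ((1 / Real.sqrt a : ℝ) : ℂ) * x (t / a))
      =ᵐ[volume.restrict (Set.Ioi (0:ℝ))]
      (fun a : ℝ => rho h t a * ((1 / Real.sqrt a : ℝ) : ℂ) * x (t / a)) := by
    filter_upwards [(hFub t ht).prod_left_ae, ae_restrict_mem measurableSet_Ioi]
      with a hsl ha
    have ha' : (0:ℝ) < a := ha
    set c : ℂ := ((1 / Real.sqrt a : ℝ) : ℂ) * x (t / a) with hcdef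
    have hre : ∀ ω : ℝ,
        rhoHat h ω a * Complex.exp (2 * π * Complex.I * ω * t) *
          ((1 / Real.sqrt a : ℝ) : ℂ) * x (t / a)
        = rhoHat h ω a * Complex.exp (2 * π * Complex.I * ω * t) * c := by
      intro ω; rw [hcdef]; ring
    simp only [hre]
    rw [integral_mul_const]
    have hrhs : rho h t a * ((1 / Real.sqrt a : ℝ) : ℂ) * x (t / a)
        = rho h t a * c := by rw [hcdef]; ring
    rw [hrhs]
    by_cases hc : c = 0
    · simp [hc]
    congr 1
    -- now prove `∫ ω, rhoHat h ω a * exp(2πiωt) = rho h t a` via Fourier inversion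
    set g : ℝ → ℂ := Set.indicator (Set.Ioi 0) (fun s => rho h s a) with hgdef
    have hgint : Integrable g :=
      (integrable_indicator_iff measurableSet_Ioi).2 (hrho a ha')
    have hFg : (fun ω => rhoHat h ω a) = 𝓕 g := by
      funext ω
      have step1 : rhoHat h ω a
          = ∫ s in Set.Ioi (0:ℝ), Complex.exp ((↑(-2 * π * (s * ω)) : ℂ) * Complex.I) • rho h s a := by
        rw [rhoHat]
        refine setIntegral_congr_fun measurableSet_Ioi fun s _ => ?_
        rw [smul_eq_mul, mul_comm]
        congr 1
        push_cast
        ring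
      rw [step1, ← integral_indicator measurableSet_Ioi, Real.fourier_eq']
      congr 1
      funext s
      by_cases hs : s ∈ Set.Ioi (0:ℝ) <;>
        simp [hgdef, Set.indicator_of_mem, Set.indicator_of_notMem, hs,
          RCLike.inner_apply, starRingEnd_apply] <;>
        left <;> ring_nf
    have h1 : Integrable (fun ω => rhoHat h ω a * Complex.exp (2 * π * Complex.I * ω * t)) := by
      have h1' := hsl.mul_const c⁻¹
      refine h1'.congr (Filter.Eventually.of_forall fun ω => ?_)
      simp only [hre]
      field_simp
    have h2 : Integrable (fun ω => rhoHat h ω a) := by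
      have hm : AEStronglyMeasurable (fun ω => rhoHat h ω a) volume := by
        rw [hFg]
        exact (VectorFourier.fourierIntegral_continuous Real.continuous_fourierChar
          (by continuity) hgint).aestronglyMeasurable
      rw [← integrable_norm_iff hm]
      refine h1.norm.congr (Filter.Eventually.of_forall fun ω => ?_)
      show ‖rhoHat h ω a * Complex.exp (2 * ↑π * Complex.I * ↑ω * ↑t)‖ = ‖rhoHat h ω a‖
      rw [norm_mul]
      have : (2 * ↑π * Complex.I * ↑ω * ↑t) = ((2 * π * ω * t : ℝ) : ℂ) * Complex.I := by
        push_cast; ring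
      rw [this, Complex.norm_exp_ofReal_mul_I, mul_one]
    have hFgi : Integrable (𝓕 g) := by rw [← hFg]; exact h2
    have hcont : ContinuousAt g t := by
      have hev : (fun s => rho h s a) =ᶠ[nhds t] g := by
        filter_upwards [Ioi_mem_nhds ht] with s hs
        simp [hgdef, Set.indicator_of_mem hs]
      exact ((hrhoc a ha').continuousAt).congr hev
    have hinv : 𝓕⁻ (𝓕 g) t = g t := hgint.fourierInv_fourier_eq hFgi hcont
    calc (∫ ω : ℝ, rhoHat h ω a * Complex.exp (2 * π * Complex.I * ω * t))
        = ∫ ω : ℝ, Complex.exp ((↑(2 * π * (ω * t)) : ℂ) * Complex.I) • 𝓕 g ω := by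
          refine integral_congr_ae (Filter.Eventually.of_forall fun ω => ?_)
          show rhoHat h ω a * Complex.exp (2 * ↑π * Complex.I * ↑ω * ↑t)
            = Complex.exp ((↑(2 * π * (ω * t)) : ℂ) * Complex.I) • 𝓕 g ω
          rw [smul_eq_mul, mul_comm, ← hFg]
          congr 1
          push_cast
          ring
      _ = 𝓕⁻ (𝓕 g) t := by
          rw [Real.fourierInv_eq']
          simp [RCLike.inner_apply, starRingEnd_apply]
          congr 1; funext ω; ring_nf
      _ = g t := hinv
      _ = rho h t a := Set.indicator_of_mem ht _
  rw [integral_congr_ae key]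
  -- Step 3: change of variables a = t/(t-τ)
  have himg : (fun τ : ℝ => t / (t - τ)) '' Set.Iio t = Set.Ioi (0:ℝ) := by
    ext a
    constructor
    · rintro ⟨τ, hτ, rfl⟩
      exact div_pos ht (by simp at hτ; linarith)
    · intro ha
      have ha' : (0:ℝ) < a := ha
      refine ⟨t - t / a, ?_, ?_⟩
      · have : 0 < t / a := div_pos ht ha'
        simp only [Set.mem_Iio]; linarith
      · field_simp
        ring
  have hderiv : ∀ τ ∈ Set.Iio t,
      HasDerivWithinAt (fun τ : ℝ => t / (t - τ)) (t / (t - τ)^2) (Set.Iio t) τ := by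
    intro τ hτ
    have hτt : τ < t := hτ
    have hne : t - τ ≠ 0 := sub_ne_zero.2 hτt.ne'
    have h1 : HasDerivAt (fun τ : ℝ => t - τ) (-1) τ := by
      simpa using (hasDerivAt_id τ).const_sub t
    have h3 := h1.inv hne
    have h4 := h3.const_mul t
    have : HasDerivAt (fun τ : ℝ => t / (t - τ)) (t / (t - τ)^2) τ := by
      exact (h4.congr_deriv (by ring)).congr_of_eventuallyEq
        (Filter.Eventually.of_forall fun y => by simp [div_eq_mul_inv])
    exact this.hasDerivWithinAt
  have hinj : Set.InjOn (fun τ : ℝ => t / (t - τ)) (Set.Iio t) := by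
    intro τ1 h1 τ2 h2 heq
    have n1 : t - τ1 ≠ 0 := sub_ne_zero.2 (Set.mem_Iio.1 h1).ne'
    have n2 : t - τ2 ≠ 0 := sub_ne_zero.2 (Set.mem_Iio.1 h2).ne'
    simp only at heq
    field_simp at heq
    linarith
  rw [← himg, integral_image_eq_integral_abs_deriv_smul measurableSet_Iio hderiv hinj]
  rw [← setIntegral_eq_integral_of_forall_compl_eq_zero
    (s := Set.Iio t) (f := fun τ : ℝ => h t τ * x (t - τ))
    (fun τ hτ => by
      show h t τ * x (t - τ) = 0
      have : t - τ ≤ 0 := by simp [Set.mem_Iio] at hτ; linarith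
      rw [hsupp _ this, mul_zero])]
  refine setIntegral_congr_fun measurableSet_Iio fun τ hτ => ?_
  have hτt : τ < t := hτ
  have hu : (0:ℝ) < t - τ := by linarith
  have hune : t - τ ≠ 0 := hu.ne'
  have ha : (0:ℝ) < t / (t - τ) := div_pos ht hu
  have hane : t / (t - τ) ≠ 0 := ha.ne'
  have hs : (0:ℝ) < Real.sqrt (t / (t - τ)) := Real.sqrt_pos.2 ha
  have hsne : Real.sqrt (t / (t - τ)) ≠ 0 := hs.ne'
  have hsq : Real.sqrt (t / (t - τ)) * Real.sqrt (t / (t - τ)) = t / (t - τ) :=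
    Real.mul_self_sqrt ha.le
  have e1 : t / (t / (t - τ)) = t - τ := by field_simp
  have e3 : t - (t - τ) = τ := by ring
  rw [rho, e1, e3]
  have hscal : |t / (t - τ)^2| * (t / (t / (t - τ) * Real.sqrt (t / (t - τ))))
      * (1 / Real.sqrt (t / (t - τ))) = 1 := by
    rw [abs_of_pos (div_pos ht (pow_pos hu 2))]
    generalize Real.sqrt (t / (t - τ)) = s at hsq hsne ⊢
    field_simp
    field_simp at hsq
    linear_combination (-1 : ℝ) * hsq
  symm
  trans (((|t / (t - τ)^2| * (t / (t / (t - τ) * Real.sqrt (t / (t - τ))))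
      * (1 / Real.sqrt (t / (t - τ))) : ℝ) : ℂ) * (h t τ * x (t - τ)))
  · push_cast [Complex.real_smul]
    ring
  · rw [hscal]
    simp
end
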